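/- For any Hermitian matrices S and T on a finite-dimensional complex inner product space satisfying 0 ≤ S ≤ I and T ≥ 0, the operator inequality I - (S+T)^{-1/2} S (S+T)^{-1/2} ≤ 2(I - S) + 4T holds, where (S+T)^{-1/2} denotes the square root of the Moore–Penrose pseudoinverse of S+T. -/

import Mathlib

noncomputable section

open scoped BigOperators ComplexOrder

open Classical in
/-- The coset state `ρ_H = (1/|G|) ∑_g |gH⟩⟨gH|`; its `(x, y)` entry is
`1/|G|` if `x⁻¹ y ∈ H` and `0` otherwise. -/
def cosetState {G : Type*} [Group G] [Fintype G] (H : Subgroup G) : Matrix G G ℂ :=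
  fun x y => if x⁻¹ * y ∈ H then (1 : ℂ) / (Fintype.card G) else 0

/-- `k`-fold tensor power of a matrix. -/
def tensorPow {n : Type*} [Fintype n] (M : Matrix n n ℂ) (k : ℕ) :
    Matrix (Fin k → n) (Fin k → n) ℂ :=
  fun x y => ∏ i, M (x i) (y i)

/-- Trace norm `‖Y‖₁ = tr √(Yᴴ Y)`. -/
def traceNorm {n : Type*} [Fintype n] [DecidableEq n] (Y : Matrix n n ℂ) : ℝ :=
  (((Matrix.posSemidef_conjTranspose_mul_self Y).isHermitian.eigenvectorUnitary.1 *
      Matrix.diagonal (((↑) : ℝ → ℂ) ∘ (√·) ∘ (Matrix.posSemidef_conjTranspose_mul_self Y).isHermitian.eigenvalues) *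
      (star (Matrix.posSemidef_conjTranspose_mul_self Y).isHermitian.eigenvectorUnitary :
        Matrix n n ℂ)).trace).re

/-- Operator (spectral) norm of a matrix. -/
def opNorm {n : Type*} [Fintype n] [DecidableEq n] (M : Matrix n n ℂ) : ℝ :=
  ‖Matrix.toEuclideanCLM (𝕜 := ℂ) M‖

/-- Square root of the Moore–Penrose pseudoinverse of a Hermitian matrix
(junk value `0` on non-Hermitian input). -/
def pinvSqrt {n : Type*} [Fintype n] [DecidableEq n] (A : Matrix n n ℂ) : Matrix n n ℂ :=
  if h : A.IsHermitian then
    h.eigenvectorUnitary.1 *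
      Matrix.diagonal (fun i => ((Real.sqrt (h.eigenvalues i))⁻¹ : ℂ)) *
      (star h.eigenvectorUnitary : Matrix n n ℂ)
  else 0


section HNHelpers
open Matrix
open scoped ComplexOrder

namespace HN

variable {n : Type*} [Fintype n] [DecidableEq n]

def D (U : Matrix n n ℂ) (f : n → ℝ) : Matrix n n ℂ :=
  U * diagonal (fun i => (f i : ℂ)) * star U

lemma D_mul {U : Matrix n n ℂ} (hU : star U * U = 1) (f g : n → ℝ) :
    D U f * D U g = D U (fun i => f i * g i) := by
  have hdd : diagonal (fun i => (f i : ℂ)) * diagonal (fun i => (g i : ℂ))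
      = diagonal (fun i => ((f i * g i : ℝ) : ℂ)) := by
    rw [diagonal_mul_diagonal]
    congr 1; funext i; push_cast; ring
  calc D U f * D U g
      = U * (diagonal (fun i => (f i : ℂ)) * ((star U * U) *
          (diagonal (fun i => (g i : ℂ)) * star U))) := by
        simp only [D, Matrix.mul_assoc]
    _ = D U (fun i => f i * g i) := by
        rw [hU, Matrix.one_mul, ← Matrix.mul_assoc (diagonal fun i => (f i : ℂ))
          (diagonal fun i => (g i : ℂ)) (star U), hdd]
        simp only [D, Matrix.mul_assoc]

lemma D_sub (U : Matrix n n ℂ) (f g : n → ℝ) :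
    D U f - D U g = D U (fun i => f i - g i) := by
  simp only [D]
  rw [← Matrix.sub_mul, ← Matrix.mul_sub, diagonal_sub]
  congr 2
  funext i; simp [Pi.sub_apply]

lemma D_posSemidef (U : Matrix n n ℂ) {f : n → ℝ} (hf : ∀ i, 0 ≤ f i) :
    (D U f).PosSemidef := by
  refine PosSemidef.mul_mul_conjTranspose_same ?_ U
  refine posSemidef_diagonal_iff.mpr fun i => ?_
  exact_mod_cast hf i

lemma D_herm (U : Matrix n n ℂ) (f : n → ℝ) : (D U f).IsHermitian := by
  show (D U f)ᴴ = D U f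
  simp only [D, conjTranspose_mul, conjTranspose_conjTranspose,
    star_eq_conjTranspose, diagonal_conjTranspose, Matrix.mul_assoc]
  have : (star fun i : n => ((f i : ℂ))) = fun i : n => ((f i : ℂ)) := by
    funext i
    simp [Complex.conj_ofReal]
  rw [this]

lemma D_one {U : Matrix n n ℂ} (hU : U * star U = 1) :
    D U (fun _ => 1) = 1 := by
  simp only [D]
  rw [show (fun i : n => ((1 : ℝ) : ℂ)) = (fun _ : n => (1 : ℂ)) from funext fun i => by
    norm_num, diagonal_one, Matrix.mul_one, hU]



lemma smul_posSemidef {n : Type*} [Fintype n] [DecidableEq n]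
    {A : Matrix n n ℂ} (hA : A.PosSemidef) (c : ℝ) (hc : 0 ≤ c) :
    (((c : ℂ)) • A).PosSemidef := by
  refine posSemidef_iff_dotProduct_mulVec.mpr ⟨?_, ?_⟩
  · show ((c : ℂ) • A)ᴴ = _
    rw [conjTranspose_smul, hA.1.eq]
    congr 1
    simp [Complex.conj_ofReal]
  · intro x
    rw [smul_mulVec, dotProduct_smul, smul_eq_mul]
    exact mul_nonneg (by exact_mod_cast hc) (hA.dotProduct_mulVec_nonneg x)

lemma sub_posSemidef {n : Type*} [Fintype n] [DecidableEq n]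
    {A B : Matrix n n ℂ} (hA : A.PosSemidef) (hB : B.PosSemidef)
    (h : (B * B - A * A).PosSemidef) : (B - A).PosSemidef := by
  have hX : (B - A).IsHermitian := hB.1.sub hA.1
  apply hX.posSemidef_iff_eigenvalues_nonneg.mpr
  intro i
  by_contra hneg
  push_neg at hneg
  set t := hX.eigenvalues i with ht
  set v : n → ℂ := ⇑(hX.eigenvectorBasis i) with hv
  have hv' : (B - A) *ᵥ v = (t : ℂ) • v := by
    have h1 := hX.mulVec_eigenvectorBasis i
    rw [← hv, ← ht] at h1
    rw [h1]
    funext j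
    simp [Complex.real_smul]
  have hvne : v ≠ 0 := by
    intro h0
    apply hX.eigenvectorBasis.orthonormal.ne_zero i
    ext j
    exact congrFun h0 j
  set qA := star v ⬝ᵥ A *ᵥ v with hqA
  set qB := star v ⬝ᵥ B *ᵥ v with hqB
  have hqA0 : 0 ≤ qA := hA.dotProduct_mulVec_nonneg v
  have hqB0 : 0 ≤ qB := hB.dotProduct_mulVec_nonneg v
  have hsplit : B * B - A * A = B * (B - A) + (B - A) * A := by noncomm_ring
  have hstar : star v ᵥ* (B - A) = (t : ℂ) • star v := by
    have h2 : star ((B - A) *ᵥ v) = star v ᵥ* (B - A)ᴴ := star_mulVec _ _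
    rw [hX.eq] at h2
    rw [← h2, hv', star_smul]
    simp
  have key : (0 : ℂ) ≤ (t : ℂ) * (qB + qA) := by
    calc (0 : ℂ) ≤ star v ⬝ᵥ (B * B - A * A) *ᵥ v := h.dotProduct_mulVec_nonneg v
    _ = (t : ℂ) * (qB + qA) := by
        rw [hsplit, add_mulVec, dotProduct_add, ← mulVec_mulVec, hv', mulVec_smul,
          dotProduct_smul, ← mulVec_mulVec, dotProduct_mulVec _ (B - A) _, hstar,
          smul_dotProduct]
        simp [smul_eq_mul, mul_add]
        rfl
  -- extract real parts
  have hAim : qA.im = 0 := by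
    have := (Complex.le_def.mp hqA0).2; simpa using this.symm
  have hBim : qB.im = 0 := by
    have := (Complex.le_def.mp hqB0).2; simpa using this.symm
  have hAre : 0 ≤ qA.re := by simpa using (Complex.le_def.mp hqA0).1
  have hBre : 0 ≤ qB.re := by simpa using (Complex.le_def.mp hqB0).1
  have hkeyre : 0 ≤ t * (qB.re + qA.re) := by
    have := (Complex.le_def.mp key).1
    simpa [Complex.add_re, Complex.mul_re, Complex.ofReal_re, Complex.ofReal_im,
      hAim, hBim] using this
  have hsum : qB.re + qA.re = 0 := by simp only [Pi.zero_apply] at hneg; nlinarith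
  have hqAz : qA = 0 := by
    apply Complex.ext <;> simp [hAim]
    linarith
  have hqBz : qB = 0 := by
    apply Complex.ext <;> simp [hBim]
    linarith
  have hAv : A *ᵥ v = 0 := (hA.dotProduct_mulVec_zero_iff v).mp hqAz
  have hBv : B *ᵥ v = 0 := (hB.dotProduct_mulVec_zero_iff v).mp hqBz
  have : (t : ℂ) • v = 0 := by
    rw [← hv', sub_mulVec, hAv, hBv, sub_zero]
  rcases smul_eq_zero.mp this with h0 | h0
  · exact absurd (Complex.ofReal_eq_zero.mp h0) (ne_of_lt hneg)
  · exact hvne h0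

end HN
end HNHelpers

open Matrix HN

/-- Hayashi–Nagaoka operator inequality. -/
theorem hayashi_nagaoka {d : ℕ} (S T : Matrix (Fin d) (Fin d) ℂ)
    (hS : S.PosSemidef) (hSI : ((1 : Matrix (Fin d) (Fin d) ℂ) - S).PosSemidef)
    (hT : T.PosSemidef) :
    ((2 : ℂ) • ((1 : Matrix (Fin d) (Fin d) ℂ) - S) + (4 : ℂ) • T -
      ((1 : Matrix (Fin d) (Fin d) ℂ) - pinvSqrt (S + T) * S * pinvSqrt (S + T))).PosSemidef := by
  classical
  have hP : (S + T).PosSemidef := hS.add hT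
  have hH : (S + T).IsHermitian := hP.1
  set U : Matrix (Fin d) (Fin d) ℂ := (hH.eigenvectorUnitary : Matrix (Fin d) (Fin d) ℂ)
    with hUdef
  have hUU : U * star U = 1 := mem_unitaryGroup_iff.mp hH.eigenvectorUnitary.2
  have hUU' : star U * U = 1 := mem_unitaryGroup_iff'.mp hH.eigenvectorUnitary.2
  set lam : Fin d → ℝ := hH.eigenvalues with hlam
  have hlam0 : ∀ i, 0 ≤ lam i := hP.eigenvalues_nonneg
  have hPdecomp : S + T = D U (fun i => lam i) := hH.spectral_theorem
  set M : Matrix (Fin d) (Fin d) ℂ := D U (fun i => (Real.sqrt (lam i))⁻¹) with hMdef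
  set R : Matrix (Fin d) (Fin d) ℂ := D U (fun i => Real.sqrt (lam i)) with hRdef
  set Pi : Matrix (Fin d) (Fin d) ℂ := D U (fun i => if lam i = 0 then 0 else 1) with hPidef
  have hpinv : pinvSqrt (S + T) = M := by
    rw [pinvSqrt, dif_pos hH, hMdef]
    simp only [D, Complex.ofReal_inv, ← hlam, ← hUdef]
  -- scalar computations
  have hisql : ∀ i, (Real.sqrt (lam i))⁻¹ * lam i = Real.sqrt (lam i) := by
    intro i
    rcases eq_or_lt_of_le (hlam0 i) with h | h
    · simp [← h]
    · have hs : Real.sqrt (lam i) ≠ 0 := (Real.sqrt_pos.mpr h).ne'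
      rw [inv_mul_eq_div, div_eq_iff hs, Real.mul_self_sqrt h.le]
  have hisql' : ∀ i, lam i * (Real.sqrt (lam i))⁻¹ = Real.sqrt (lam i) := by
    intro i; rw [mul_comm]; exact hisql i
  have hsqpi : ∀ i, Real.sqrt (lam i) * (Real.sqrt (lam i))⁻¹
      = if lam i = 0 then 0 else 1 := by
    intro i
    rcases eq_or_lt_of_le (hlam0 i) with h | h
    · simp [← h]
    · have hs : Real.sqrt (lam i) ≠ 0 := (Real.sqrt_pos.mpr h).ne'
      simp [mul_inv_cancel₀ hs, h.ne']
  have hMP : M * (S + T) = R := by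
    rw [hPdecomp, hMdef, D_mul hUU']
    simp only [hisql, hRdef]
  have hPM : (S + T) * M = R := by
    rw [hPdecomp, hMdef, D_mul hUU']
    simp only [hisql', hRdef]
  have hMPM : M * (S + T) * M = Pi := by
    rw [hMP, hRdef, hMdef, D_mul hUU']
    simp only [hsqpi, hPidef]
  -- derived identities
  have hMT : M * T = R - M * S := by
    have h1 : M * S + M * T = R := by rw [← Matrix.mul_add, hMP]
    linear_combination (norm := abel) h1
  have hTM : T * M = R - S * M := by
    have h1 : S * M + T * M = R := by rw [← Matrix.add_mul, hPM]
    linear_combination (norm := abel) h1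
  have hMTM : M * T * M = Pi - M * S * M := by
    have h1 : M * S * M + M * T * M = Pi := by
      rw [← Matrix.add_mul, ← Matrix.mul_add, hMPM]
    linear_combination (norm := abel) h1
  -- positivity of the four summands
  have h1Pi : ((1 : Matrix (Fin d) (Fin d) ℂ) - Pi).PosSemidef := by
    have : (1 : Matrix (Fin d) (Fin d) ℂ) - Pi
        = D U (fun i => 1 - if lam i = 0 then 0 else 1) := by
      rw [← D_one hUU, hPidef, D_sub]
    rw [this]
    refine D_posSemidef U fun i => ?_
    split_ifs <;> norm_num
  have hRpos : R.PosSemidef := D_posSemidef U fun i => Real.sqrt_nonneg _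
  have hsqsq : ∀ i, Real.sqrt (lam i) * Real.sqrt (lam i) = lam i := fun i =>
    Real.mul_self_sqrt (hlam0 i)
  have hRR : R * R = S + T := by
    rw [hRdef, D_mul hUU']
    simp only [hsqsq]
    exact hPdecomp.symm
  have hSsq : (S - S * S).PosSemidef := by
    obtain ⟨Q, hQH, hQ2⟩ : ∃ Q : Matrix (Fin d) (Fin d) ℂ, Qᴴ = Q ∧ Q * Q = S :=
      open scoped MatrixOrder in
        ⟨CFC.sqrt S, (CFC.sqrt_nonneg S).posSemidef.1, CFC.sqrt_mul_sqrt_self S hS.nonneg⟩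
    have hps := hSI.mul_mul_conjTranspose_same Q
    rw [hQH] at hps
    have heq : Q * (1 - S) * Q = S - S * S := by
      rw [← hQ2]
      noncomm_ring
    rwa [heq] at hps
  have hRRSS : (R * R - S * S).PosSemidef := by
    rw [hRR]
    have : S + T - S * S = (S - S * S) + T := by abel
    rw [this]
    exact hSsq.add hT
  have hRS : (R - S).PosSemidef := sub_posSemidef hS hRpos hRRSS
  have hMH : Mᴴ = M := D_herm U _
  -- conjugation summands
  have hN1H : ((2 : ℂ) • (1 : Matrix (Fin d) (Fin d) ℂ) - M)ᴴ
      = (2 : ℂ) • (1 : Matrix (Fin d) (Fin d) ℂ) - M := by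
    rw [conjTranspose_sub, conjTranspose_smul, conjTranspose_one, hMH]
    norm_num
  have hC1 : (((2 : ℂ) • (1 : Matrix (Fin d) (Fin d) ℂ) - M) * T *
      ((2 : ℂ) • (1 : Matrix (Fin d) (Fin d) ℂ) - M)).PosSemidef := by
    have := hT.mul_mul_conjTranspose_same ((2 : ℂ) • (1 : Matrix (Fin d) (Fin d) ℂ) - M)
    rwa [hN1H] at this
  have hN2H : (M - (1 : Matrix (Fin d) (Fin d) ℂ))ᴴ = M - 1 := by
    rw [conjTranspose_sub, conjTranspose_one, hMH]
  have hC2 : ((M - (1 : Matrix (Fin d) (Fin d) ℂ)) * S *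
      (M - (1 : Matrix (Fin d) (Fin d) ℂ))).PosSemidef := by
    have := hS.mul_mul_conjTranspose_same (M - (1 : Matrix (Fin d) (Fin d) ℂ))
    rwa [hN2H] at this
  -- the key algebraic identity
  have hfinal : (2 : ℂ) • ((1 : Matrix (Fin d) (Fin d) ℂ) - S) + (4 : ℂ) • T -
      ((1 : Matrix (Fin d) (Fin d) ℂ) - M * S * M)
      = (((1 : Matrix (Fin d) (Fin d) ℂ) - Pi) + (4 : ℂ) • (R - S)) +
        ((((2 : ℂ) • (1 : Matrix (Fin d) (Fin d) ℂ) - M) * T *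
          ((2 : ℂ) • (1 : Matrix (Fin d) (Fin d) ℂ) - M)) +
         (2 : ℂ) • ((M - (1 : Matrix (Fin d) (Fin d) ℂ)) * S *
          (M - (1 : Matrix (Fin d) (Fin d) ℂ)))) := by
    simp only [Matrix.sub_mul, Matrix.mul_sub, smul_mul_assoc, mul_smul_comm,
      one_mul, mul_one, smul_smul, smul_sub, smul_add]
    rw [hMTM, hMT, hTM]
    module
  rw [hpinv, hfinal]
  refine PosSemidef.add (PosSemidef.add h1Pi ?_) (PosSemidef.add hC1 ?_)
  · have := smul_posSemidef hRS 4 (by norm_num)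
    simpa using this
  · have := smul_posSemidef hC2 2 (by norm_num)
    simpa using this
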